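/- Let G be a finite graph whose spectral radius λ₁(G) equals λ and suppose λI − A_G + (1/2)J is positive semidefinite. Then rank(λI − A_G) ≤ rank(λI − A_G + (1/2)J) − 1. -/

import Mathlib

open Matrix SimpleGraph Finset
open scoped Classical RealInnerProductSpace

noncomputable section

/-- The adjacency matrix of a graph is Hermitian (real symmetric). -/
lemma adjHerm {V : Type} [Fintype V] [DecidableEq V] (G : SimpleGraph V) :
    (G.adjMatrix ℝ).IsHermitian := by
  have h := G.isSymm_adjMatrix (α := ℝ)
  simpa [Matrix.IsHermitian, Matrix.conjTranspose_eq_transpose_of_trivial] using h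

/-- The spectral radius (largest adjacency eigenvalue) `λ₁(G)` of a graph. -/
def specRad {V : Type} [Fintype V] [DecidableEq V] (G : SimpleGraph V) : ℝ :=
  ⨆ i, (adjHerm G).eigenvalues i

/-- The `j`-th largest adjacency eigenvalue of `G` (1-indexed, with multiplicity):
entry `card V - j` of the increasingly sorted list of eigenvalues. -/
def nthEig {V : Type} [Fintype V] [DecidableEq V] (G : SimpleGraph V) (j : ℕ) : ℝ :=
  (Multiset.sort (Finset.univ.val.map (adjHerm G).eigenvalues) (· ≤ ·)).getD
    (Fintype.card V - j) 0

/-- The multiplicity of `μ` as an adjacency eigenvalue of `G`. -/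
def eigMult {V : Type} [Fintype V] [DecidableEq V] (G : SimpleGraph V) (μ : ℝ) : ℕ :=
  Module.finrank ℝ (Module.End.eigenspace (Matrix.toLin' (G.adjMatrix ℝ)) μ)

/-- The ball of radius `r` around `v`: all vertices at graph distance at most `r` from `v`. -/
def ball {V : Type} (G : SimpleGraph V) (v : V) (r : ℕ) : Set V := {u | G.dist v u ≤ r}

lemma psdAux {V : Type} [Fintype V] [DecidableEq V] (A : Matrix V V ℝ)
    (hA : A.IsHermitian) (l : ℝ) (hle : ∀ i, hA.eigenvalues i ≤ l) :
    (l • (1 : Matrix V V ℝ) - A).PosSemidef := by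
  have hUU : (hA.eigenvectorUnitary : Matrix V V ℝ) * star (hA.eigenvectorUnitary : Matrix V V ℝ) = 1 :=
    (Matrix.mem_unitaryGroup_iff).mp (hA.eigenvectorUnitary).2
  have hdiag : Matrix.diagonal (fun i => l - hA.eigenvalues i)
      = l • (1 : Matrix V V ℝ) - Matrix.diagonal (RCLike.ofReal ∘ hA.eigenvalues) := by
    ext i j
    by_cases h : i = j <;> simp [Matrix.diagonal, Matrix.one_apply, h]
  have hrepr : (hA.eigenvectorUnitary : Matrix V V ℝ) *
      Matrix.diagonal (fun i => l - hA.eigenvalues i) *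
      (hA.eigenvectorUnitary : Matrix V V ℝ)ᴴ = l • (1 : Matrix V V ℝ) - A := by
    rw [hdiag, Matrix.mul_sub, Matrix.sub_mul, Matrix.mul_smul, Matrix.mul_one,
      Matrix.smul_mul, ← Matrix.star_eq_conjTranspose, hUU, ← Unitary.conjStarAlgAut_apply (S := ℝ), ← hA.spectral_theorem]
  rw [← hrepr]
  exact (Matrix.posSemidef_diagonal_iff.mpr
    (fun i => by simpa [sub_nonneg] using hle i)).mul_mul_conjTranspose_same _

theorem stmt11' {V : Type} [Fintype V] [DecidableEq V] [Nonempty V] (G : SimpleGraph V)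
    (l : ℝ) (hA : (G.adjMatrix ℝ).IsHermitian) (hl : (⨆ i, hA.eigenvalues i) = l)
    (hpsd : (l • (1 : Matrix V V ℝ) - G.adjMatrix ℝ
        + (1 / 2 : ℝ) • (Matrix.of fun _ _ => (1 : ℝ))).PosSemidef) :
    (l • (1 : Matrix V V ℝ) - G.adjMatrix ℝ).rank ≤
      (l • (1 : Matrix V V ℝ) - G.adjMatrix ℝ
        + (1 / 2 : ℝ) • (Matrix.of fun _ _ => (1 : ℝ))).rank - 1 := by
  set A := G.adjMatrix ℝ with hAdef
  set M : Matrix V V ℝ := l • (1 : Matrix V V ℝ) - A with hMdef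
  set C : Matrix V V ℝ := (1 / 2 : ℝ) • (Matrix.of fun _ _ => (1 : ℝ)) with hCdef
  -- eigenvalues bounded by l
  have hle : ∀ i, hA.eigenvalues i ≤ l := by
    intro i
    rw [← hl]
    exact le_ciSup (Set.Finite.bddAbove (Set.finite_range _)) i
  have hMpsd : M.PosSemidef := psdAux A hA l hle
  -- top eigenvalue attained
  obtain ⟨i₀, hi₀⟩ : ∃ i, ∀ j, hA.eigenvalues j ≤ hA.eigenvalues i :=
    Finite.exists_max hA.eigenvalues
  have heig : hA.eigenvalues i₀ = l :=
    le_antisymm (hle i₀) (by rw [← hl]; exact ciSup_le hi₀)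
  set x : V → ℝ := ⇑(hA.eigenvectorBasis i₀) with hxdef
  have hAx : A *ᵥ x = l • x := by rw [← heig]; exact hA.mulVec_eigenvectorBasis i₀
  have hxne : ∃ v, x v ≠ 0 := by
    by_contra h
    push_neg at h
    have : hA.eigenvectorBasis i₀ = 0 := by
      ext v; exact h v
    exact hA.eigenvectorBasis.orthonormal.ne_zero i₀ this
  set y : V → ℝ := fun v => |x v| with hydef
  -- sum of y is positive
  have hsum : 0 < ∑ v, y v := by
    obtain ⟨v, hv⟩ := hxne
    exact Finset.sum_pos' (fun u _ => abs_nonneg _)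
      ⟨v, Finset.mem_univ v, abs_pos.mpr hv⟩
  -- y is in the kernel of M
  have hxx : y ⬝ᵥ y = x ⬝ᵥ x := by
    simp only [dotProduct, hydef, abs_mul_abs_self]
  have hray : x ⬝ᵥ (A *ᵥ x) ≤ y ⬝ᵥ (A *ᵥ y) := by
    simp only [dotProduct, mulVec, Finset.mul_sum]
    refine Finset.sum_le_sum fun u _ => Finset.sum_le_sum fun v _ => ?_
    have hAnn : 0 ≤ A u v := by rw [hAdef]; simp only [SimpleGraph.adjMatrix_apply]; split <;> norm_num
    calc x u * (A u v * x v) ≤ |x u * (A u v * x v)| := le_abs_self _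
      _ = y u * (A u v * y v) := by
          simp [hydef, abs_mul, abs_of_nonneg hAnn, mul_comm, mul_left_comm]
  have hxAx : x ⬝ᵥ (A *ᵥ x) = l * (x ⬝ᵥ x) := by
    rw [hAx, dotProduct_smul, smul_eq_mul]
  have hMy : M *ᵥ y = 0 := by
    refine (hMpsd.dotProduct_mulVec_zero_iff y).mp ?_
    have h1 : star y ⬝ᵥ (M *ᵥ y) ≤ 0 := by
      have : star y = y := by simp
      rw [this, hMdef, Matrix.sub_mulVec, Matrix.smul_mulVec, Matrix.one_mulVec,
        dotProduct_sub, dotProduct_smul, smul_eq_mul, hxx]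
      linarith [hray, hxAx]
    exact le_antisymm h1 (hMpsd.dotProduct_mulVec_nonneg y)
  -- y is not in the kernel of M + C
  have hCy : ∀ u, (C *ᵥ y) u = (1 / 2) * ∑ v, y v := by
    intro u
    simp [hCdef, mulVec, dotProduct, Finset.mul_sum]
  have hMCy : (M + C) *ᵥ y ≠ 0 := by
    intro h
    have := congrFun h (Classical.arbitrary V)
    rw [Matrix.add_mulVec, hMy] at this
    simp only [Pi.add_apply, Pi.zero_apply, zero_add] at this
    rw [hCy] at this
    nlinarith [hsum]
  -- quadratic form of C is nonnegative
  have hCquad : ∀ z : V → ℝ, 0 ≤ z ⬝ᵥ (C *ᵥ z) := by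
    intro z
    have hz : ∀ u, (C *ᵥ z) u = (1 / 2) * ∑ v, z v := by
      intro u; simp [hCdef, mulVec, dotProduct, Finset.mul_sum]
    have : z ⬝ᵥ (C *ᵥ z) = (1 / 2) * (∑ v, z v) * (∑ v, z v) := by
      simp only [dotProduct, hz, ← Finset.sum_mul]
      ring
    rw [this]
    nlinarith [sq_nonneg (∑ v, z v)]
  -- kernel inclusion
  have hker : LinearMap.ker (M + C).mulVecLin ≤ LinearMap.ker M.mulVecLin := by
    intro z hz
    rw [LinearMap.mem_ker, Matrix.mulVecLin_apply] at hz ⊢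
    have hMz : star z ⬝ᵥ (M *ᵥ z) = 0 := by
      have hsz : star z = z := by simp
      have h0 : z ⬝ᵥ ((M + C) *ᵥ z) = 0 := by rw [hz, dotProduct_zero]
      rw [Matrix.add_mulVec, dotProduct_add] at h0
      have h1 : 0 ≤ z ⬝ᵥ (M *ᵥ z) := by
        have := hMpsd.dotProduct_mulVec_nonneg z; rwa [hsz] at this
      have h2 := hCquad z
      rw [hsz]
      linarith
    exact (hMpsd.dotProduct_mulVec_zero_iff z).mp hMz
  have hymem : y ∈ LinearMap.ker M.mulVecLin := by
    rw [LinearMap.mem_ker, Matrix.mulVecLin_apply]; exact hMy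
  have hynmem : y ∉ LinearMap.ker (M + C).mulVecLin := by
    rw [LinearMap.mem_ker, Matrix.mulVecLin_apply]; exact hMCy
  have hlt : LinearMap.ker (M + C).mulVecLin < LinearMap.ker M.mulVecLin :=
    lt_of_le_of_ne hker (fun h => hynmem (h ▸ hymem))
  have hdim := Submodule.finrank_lt_finrank_of_lt hlt
  have r1 := LinearMap.finrank_range_add_finrank_ker M.mulVecLin
  have r2 := LinearMap.finrank_range_add_finrank_ker (M + C).mulVecLin
  rw [Matrix.rank, Matrix.rank]
  omega

/-- If `λ₁(G) = λ` and `λI - A_G + (1/2)J` is positive semidefinite, then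
`rank(λI - A_G) ≤ rank(λI - A_G + (1/2)J) - 1`. -/
theorem stmt11 {V : Type} [Fintype V] [DecidableEq V] [Nonempty V] (G : SimpleGraph V)
    (l : ℝ) (hl : specRad G = l)
    (hpsd : (l • (1 : Matrix V V ℝ) - G.adjMatrix ℝ
        + (1 / 2 : ℝ) • (Matrix.of fun _ _ => (1 : ℝ))).PosSemidef) :
    (l • (1 : Matrix V V ℝ) - G.adjMatrix ℝ).rank ≤
      (l • (1 : Matrix V V ℝ) - G.adjMatrix ℝ
        + (1 / 2 : ℝ) • (Matrix.of fun _ _ => (1 : ℝ))).rank - 1 := by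
  have hl' : (⨆ i, (adjHerm G).eigenvalues i) = l := by rwa [specRad] at hl
  exact stmt11' G l (adjHerm G) hl' hpsd

end
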